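/- arXiv:2004.14359 — 5 statements merged into one kernel-verified Lean document; each statement's English description precedes it below -/
import Mathlib

section
/- Every KKPS field u(p)=A(q(p))Jp+B(q(p))J'p is localizable: D(|u|²)(p)[u(p)] = 0 for all p∈S³. Moreover, on S³ one has |u|²(p) = A(q)² + B(q)² + 2(2q−1)A(q)B(q) with q = q(p), and the first integral property Dq(p)[u(p)] = 0 holds for all p∈S³. -/
open RealInnerProductSpace

noncomputable section

/-- ℝ⁴ with coordinates (x₁,y₁,x₂,y₂) and the Euclidean inner product; S³ is the set
of `p` with `‖p‖ = 1`. -/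
abbrev E4 := EuclideanSpace ℝ (Fin 4)

/-- The linear map `J(x₁,y₁,x₂,y₂) = (−y₁,x₁,−y₂,x₂)`; its restriction to S³ is the
Hopf field ξ. -/
def Jm (p : E4) : E4 := WithLp.toLp 2 ![-p 1, p 0, -p 3, p 2]

/-- The linear map `J'(x₁,y₁,x₂,y₂) = (−y₁,x₁,y₂,−x₂)`; its restriction to S³ is the
anti-Hopf field ξ'. -/
def Jm' (p : E4) : E4 := WithLp.toLp 2 ![-p 1, p 0, p 3, -p 2]

/-- The frame field `X₁(p) = (−x₂,y₂,x₁,−y₁)`. -/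
def X1 (p : E4) : E4 := WithLp.toLp 2 ![-p 2, p 3, p 0, -p 1]

/-- The frame field `X₂(p) = (−y₂,−x₂,y₁,x₁)`. -/
def X2 (p : E4) : E4 := WithLp.toLp 2 ![-p 3, -p 2, p 1, p 0]

/-- Orthogonal projection onto the tangent space of S³ at `p`: `P_p(v) = v − ⟨p,v⟩p`. -/
def Pt (p v : E4) : E4 := v - ⟪p, v⟫ • p

/-- A (smooth) tangent field on S³: a smooth map `u : ℝ⁴ → ℝ⁴` with `⟨p, u p⟩ = 0`
for every `p ∈ S³`. -/
def IsTangentField (u : E4 → E4) : Prop :=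
  ContDiff ℝ (⊤ : ℕ∞) u ∧ ∀ p : E4, ‖p‖ = 1 → ⟪p, u p⟫ = 0

/-- Levi-Civita covariant derivative of the round metric: `(∇_u v)(p) = P_p(Dv(p)[u(p)])`. -/
def scov (u v : E4 → E4) (p : E4) : E4 := Pt p (fderiv ℝ v p (u p))

/-- Spherical gradient: `(grad f)(p) = P_p(∇f(p))`. -/
def sgrad (f : E4 → ℝ) (p : E4) : E4 := Pt p (gradient f p)

/-- Spherical divergence: `(div u)(p) = tr(Du(p)) − ⟨Du(p)[p], p⟩`. -/
def sdiv (u : E4 → E4) (p : E4) : ℝ :=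
  LinearMap.trace ℝ E4 (fderiv ℝ u p).toLinearMap - ⟪fderiv ℝ u p p, p⟫

/-- Spherical Laplacian with geometers' sign: `Δf = −div (grad f)`. -/
def slap (f : E4 → ℝ) (p : E4) : ℝ := - sdiv (sgrad f) p

/-- The transverse complex structure of the standard Sasakian structure on S³:
`φ_p(v) = Jv + ⟨v, Jp⟩p`. -/
def phiT (p v : E4) : E4 := Jm v + ⟪v, Jm p⟫ • p

/-- `u` is a steady Euler field on S³ with pressure `pr`: `div u = 0` on S³ and
`(∇_u u)(p) = −(grad pr)(p)` for all `p ∈ S³`. -/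
def IsSteadyEulerWithPressure (u : E4 → E4) (pr : E4 → ℝ) : Prop :=
  ∀ p : E4, ‖p‖ = 1 → sdiv u p = 0 ∧ scov u u p = - sgrad pr p

/-- `u` is a steady Euler field on S³, for some smooth pressure. -/
def IsSteadyEuler (u : E4 → E4) : Prop :=
  ∃ pr : E4 → ℝ, ContDiff ℝ (⊤ : ℕ∞) pr ∧ IsSteadyEulerWithPressure u pr

/-- A tangent field `u` is localizable if `D(|u|²)(p)[u(p)] = 0` for all `p ∈ S³`. -/
def IsLocalizable (u : E4 → E4) : Prop :=
  ∀ p : E4, ‖p‖ = 1 → fderiv ℝ (fun q => ⟪u q, u q⟫) p (u p) = 0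

/-- The function `q(p) = x₁² + y₁²`. -/
def qf (p : E4) : ℝ := p 0 ^ 2 + p 1 ^ 2

/-- The KKPS family: `u(p) = A(q(p))·Jp + B(q(p))·J'p`. -/
def kkps (A B : ℝ → ℝ) (p : E4) : E4 := A (qf p) • Jm p + B (qf p) • Jm' p

/-- Determinant of four vectors in ℝ⁴ (given as rows). -/
def det4 (a b c d : E4) : ℝ :=
  Matrix.det (Matrix.of ![(fun i => a i), (fun i => b i), (fun i => c i), (fun i => d i)])

/-- Cross product of tangent vectors at `p ∈ S³`: `⟨v ×_p w, z⟩ = det(p,v,w,z)`. -/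
def crossS (p v w : E4) : E4 := WithLp.toLp 2 (fun i => det4 p v w (WithLp.toLp 2 (Pi.single i 1)))

/-- `c` is the curl of the tangent field `u` on S³: `c` is a tangent field such that
`⟨(∇_v u)(p), w⟩ − ⟨(∇_w u)(p), v⟩ = ⟨c(p), v ×_p w⟩` for all tangent `v, w` at `p ∈ S³`
(with the orientation convention given by `det4`, for which `curl ξ = 2ξ`). -/
def IsCurlOf (u c : E4 → E4) : Prop :=
  IsTangentField c ∧
  ∀ p : E4, ‖p‖ = 1 → ∀ v w : E4, ⟪p, v⟫ = 0 → ⟪p, w⟫ = 0 →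
    ⟪Pt p (fderiv ℝ u p v), w⟫ - ⟪Pt p (fderiv ℝ u p w), v⟫ = ⟪c p, crossS p v w⟫

/-- The Sasakian KKPS ansatz on S³: `u(p) = F(ψ(p))·Jp + φ_p((grad (G∘ψ))(p))`. -/
def ansatz (ψ : E4 → ℝ) (F G : ℝ → ℝ) (p : E4) : E4 :=
  F (ψ p) • Jm p + phiT p (sgrad (fun q => G (ψ q)) p)

/-- The quartic polynomial `ψ_a`, a deformation of Nomizu's isoparametric polynomial. -/
def ψa (a : ℝ) (p : E4) : ℝ :=
  (1/2) * ((p 0 ^ 2 + p 1 ^ 2 + p 2 ^ 2 + p 3 ^ 2) ^ 2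
      + (p 0 ^ 2 + p 1 ^ 2 - p 2 ^ 2 - p 3 ^ 2) ^ 2)
    + 2 * a * ((p 0 ^ 2 - p 1 ^ 2) * (p 2 ^ 2 - p 3 ^ 2) + 4 * p 0 * p 1 * p 2 * p 3)

/-- The field `u_a(p) = F(ψ_a(p))·Jp + φ_p((grad ψ_a)(p))`. -/
def nomizuField (a : ℝ) (F : ℝ → ℝ) (p : E4) : E4 :=
  F (ψa a p) • Jm p + phiT p (sgrad (ψa a) p)

/-- The field `u(p) = 2a₁(x₁y₂+y₁x₂)·X₁(p) + 2a₂(x₁x₂−y₁y₂)·X₂(p)`. -/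
def abField (a₁ a₂ : ℝ) (p : E4) : E4 :=
  (2 * a₁ * (p 0 * p 3 + p 1 * p 2)) • X1 p + (2 * a₂ * (p 0 * p 2 - p 1 * p 3)) • X2 p


def pr0 : E4 →L[ℝ] ℝ := EuclideanSpace.proj 0
def pr1 : E4 →L[ℝ] ℝ := EuclideanSpace.proj 1

lemma qf_hasFDerivAt (p : E4) : HasFDerivAt qf ((2 * p 0) • pr0 + (2 * p 1) • pr1) p := by
  have h0 : HasFDerivAt (fun z : E4 => z 0) pr0 p := pr0.hasFDerivAt
  have h1 : HasFDerivAt (fun z : E4 => z 1) pr1 p := pr1.hasFDerivAt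
  have h := (h0.mul h0).add (h1.mul h1)
  have heq : qf = fun z : E4 => z 0 * z 0 + z 1 * z 1 := by funext z; simp [qf]; ring
  rw [heq]
  refine h.congr_fderiv ?_
  ext v
  simp [pr0, pr1]
  ring

lemma dq_zero (A B : ℝ → ℝ) (p : E4) : fderiv ℝ qf p (kkps A B p) = 0 := by
  rw [(qf_hasFDerivAt p).fderiv]
  simp [kkps, Jm, Jm', pr0, pr1, PiLp.add_apply, PiLp.smul_apply, smul_eq_mul]
  ring

lemma tangent0 (A B : ℝ → ℝ) (p : E4) : ⟪p, kkps A B p⟫ = 0 := by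
  simp [kkps, Jm, Jm', PiLp.inner_apply, RCLike.inner_apply, Fin.sum_univ_four,
    PiLp.add_apply, PiLp.smul_apply, smul_eq_mul]
  ring

def Hfun (A B : ℝ → ℝ) : ℝ × ℝ → ℝ :=
  fun st => (A st.1 ^ 2 + B st.1 ^ 2) * st.2 + 2 * A st.1 * B st.1 * (2 * st.1 - st.2)

lemma inner_eq (A B : ℝ → ℝ) :
    (fun z : E4 => ⟪kkps A B z, kkps A B z⟫) = fun z => Hfun A B (qf z, ⟪z, z⟫) := by
  funext z
  simp [Hfun, kkps, Jm, Jm', PiLp.inner_apply, RCLike.inner_apply, Fin.sum_univ_four,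
    PiLp.add_apply, PiLp.smul_apply, smul_eq_mul, qf, EuclideanSpace.norm_sq_eq]
  ring

lemma loc (A B : ℝ → ℝ) (hA : ContDiff ℝ (⊤ : ℕ∞) A) (hB : ContDiff ℝ (⊤ : ℕ∞) B) (p : E4) :
    fderiv ℝ (fun z : E4 => ⟪kkps A B z, kkps A B z⟫) p (kkps A B p) = 0 := by
  have hA' := hA.differentiable (by simp)
  have hB' := hB.differentiable (by simp)
  have hH : DifferentiableAt ℝ (Hfun A B) (qf p, ⟪p, p⟫) := by
    unfold Hfun; fun_prop
  have hq := qf_hasFDerivAt p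
  have hn := (hasFDerivAt_id p).inner ℝ (hasFDerivAt_id p)
  have hg := hq.prodMk hn
  have hc := hH.hasFDerivAt.comp p hg
  rw [inner_eq A B]
  rw [show (fun z : E4 => Hfun A B (qf z, ⟪z, z⟫)) =
      (Hfun A B ∘ fun x : E4 => (qf x, ⟪id x, id x⟫)) from rfl]
  rw [hc.fderiv, ContinuousLinearMap.comp_apply]
  have h0 : (((2 * p 0) • pr0 + (2 * p 1) • pr1).prod
      ((fderivInnerCLM ℝ ((id p : E4), (id p : E4))).comp
        ((ContinuousLinearMap.id ℝ E4).prod (ContinuousLinearMap.id ℝ E4)))) (kkps A B p)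
      = (0 : ℝ × ℝ) := by
    have hd := dq_zero A B p
    rw [(qf_hasFDerivAt p).fderiv] at hd
    refine Prod.ext ?_ ?_
    · simpa using hd
    · simp only [ContinuousLinearMap.prod_apply, ContinuousLinearMap.comp_apply,
        ContinuousLinearMap.id_apply, fderivInnerCLM_apply, id]
      rw [tangent0, real_inner_comm, tangent0]
      simp
  rw [h0, map_zero]

/-- every KKPS field is localizable; moreover on S³ one has
`|u|² = A(q)² + B(q)² + 2(2q−1)A(q)B(q)` and `Dq(p)[u(p)] = 0`. -/
theorem statement5 (A B : ℝ → ℝ) (hA : ContDiff ℝ (⊤ : ℕ∞) A) (hB : ContDiff ℝ (⊤ : ℕ∞) B) :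
    IsLocalizable (kkps A B) ∧
    (∀ p : E4, ‖p‖ = 1 →
      ⟪kkps A B p, kkps A B p⟫
        = A (qf p) ^ 2 + B (qf p) ^ 2 + 2 * (2 * qf p - 1) * A (qf p) * B (qf p)) ∧
    (∀ p : E4, ‖p‖ = 1 → fderiv ℝ qf p (kkps A B p) = 0) := by
  refine ⟨fun p _ => loc A B hA hB p, ?_, fun p _ => dq_zero A B p⟩
  intro p hp
  have hN : ⟪p, p⟫ = 1 := by
    rw [real_inner_self_eq_norm_mul_norm, hp]; ring
  rw [congrFun (inner_eq A B) p, hN]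
  simp only [Hfun]
  ring
end
end

section
/- The linear map Ψ(x₁,y₁,x₂,y₂) = (1/√2)·(x₁+y₂, y₁−x₂, y₁+x₂, −x₁+y₂) of ℝ⁴ is orthogonal (Ψ ∈ O(4)), commutes with J (Ψ∘J = J∘Ψ, so it preserves the Hopf field), and pulls Nomizu's polynomial back to a Cartan–Münzer polynomial of degree 2: ψ_N(Ψ(x)) = 4(x₁²+y₁²)(x₂²+y₂²) for all x ∈ ℝ⁴. -/
open RealInnerProductSpace

noncomputable section

/-- The linear map `Ψ(x₁,y₁,x₂,y₂) = (1/√2)(x₁+y₂, y₁−x₂, y₁+x₂, −x₁+y₂)`. -/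
def ΨL (p : E4) : E4 :=
  (Real.sqrt 2)⁻¹ • (WithLp.toLp 2 ![p 0 + p 3, p 1 - p 2, p 1 + p 2, -p 0 + p 3] : E4)

/-- Nomizu's polynomial `ψ_N(x₁,y₁,x₂,y₂) = (x₁²+x₂²−y₁²−y₂²)² + 4(x₁y₁+x₂y₂)²`. -/
def ψN (p : E4) : ℝ :=
  (p 0 ^ 2 + p 2 ^ 2 - p 1 ^ 2 - p 3 ^ 2) ^ 2 + 4 * (p 0 * p 1 + p 2 * p 3) ^ 2

/-- `Ψ` is linear and orthogonal, commutes with `J` (hence preserves the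
Hopf field), and pulls Nomizu's polynomial back to `4(x₁²+y₁²)(x₂²+y₂²)`. -/
theorem statement13 :
    IsLinearMap ℝ ΨL ∧
    (∀ x y : E4, ⟪ΨL x, ΨL y⟫ = ⟪x, y⟫) ∧
    (∀ x : E4, ΨL (Jm x) = Jm (ΨL x)) ∧
    (∀ x : E4, ψN (ΨL x) = 4 * (x 0 ^ 2 + x 1 ^ 2) * (x 2 ^ 2 + x 3 ^ 2)) := by
  have hs : (Real.sqrt 2)⁻¹ * (Real.sqrt 2)⁻¹ = 1 / 2 := by
    rw [← mul_inv, Real.mul_self_sqrt (by norm_num : (0:ℝ) ≤ 2)]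
    norm_num
  refine ⟨⟨fun x y => ?_, fun c x => ?_⟩, fun x y => ?_, fun x => ?_, fun x => ?_⟩
  · ext i; fin_cases i <;> simp [ΨL] <;> ring
  · ext i; fin_cases i <;> simp [ΨL] <;> ring
  · simp only [PiLp.inner_apply, RCLike.inner_apply, conj_trivial, Fin.sum_univ_four]
    simp [ΨL]
    linear_combination (2 * (x 0 * y 0 + x 1 * y 1 + x 2 * y 2 + x 3 * y 3)) * hs
  · ext i; fin_cases i <;> simp [ΨL, Jm] <;> ring
  · simp only [ψN]
    simp [ΨL]
    linear_combination (16 * ((x 0 * x 3 + x 1 * x 2) ^ 2 + (x 0 * x 2 - x 1 * x 3) ^ 2) *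
      ((Real.sqrt 2)⁻¹ * (Real.sqrt 2)⁻¹ + 1 / 2)) * hs
end
end

section
/- For all a₁,a₂ ∈ ℝ, the tangent field u(p) = 2a₁(x₁y₂+y₁x₂)X₁(p) + 2a₂(x₁x₂−y₁y₂)X₂(p) is a steady Euler field on S³: div u = 0 on S³ and (∇_u u)(p) = −(grad π)(p) for all p∈S³, with pressure π(p) = ¼a₁a₂(2(x₁²+y₁²−x₂²−y₂²)² − 1). Moreover its Bernoulli function b = π + ½|u|² equals, in Hopf coordinates, ¼[a₁a₂ cos 4s + (a₁²+a₂² − (a₁²−a₂²) cos 2(φ₁+φ₂)) sin² 2s]. -/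
open RealInnerProductSpace

noncomputable section

/-- The point of S³ with Hopf coordinates `(cos s·e^{iφ₁}, sin s·e^{iφ₂})`. -/
def hopfPt (s φ₁ φ₂ : ℝ) : E4 :=
  WithLp.toLp 2 ![Real.cos s * Real.cos φ₁, Real.cos s * Real.sin φ₁,
    Real.sin s * Real.cos φ₂, Real.sin s * Real.sin φ₂]

/-- The pressure `π(p) = ¼a₁a₂(2(x₁²+y₁²−x₂²−y₂²)² − 1)` (equal to `¼a₁a₂cos 4s` on S³). -/
def abPressure (a₁ a₂ : ℝ) (p : E4) : ℝ :=
  (1/4) * a₁ * a₂ * (2 * (p 0 ^ 2 + p 1 ^ 2 - p 2 ^ 2 - p 3 ^ 2) ^ 2 - 1)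


/-! ### Auxiliary machinery for the proof -/

abbrev prj (i : Fin 4) : E4 →L[ℝ] ℝ := EuclideanSpace.proj i

lemma prj_apply (i : Fin 4) (v : E4) : prj i v = v i := rfl

lemma inner4 (x y : E4) : ⟪x,y⟫ = x 0*y 0 + x 1*y 1 + x 2*y 2 + x 3*y 3 := by
  simp [PiLp.inner_apply, RCLike.inner_apply, Fin.sum_univ_four]
  ring

def X1L : E4 →L[ℝ] E4 := LinearMap.toContinuousLinearMap
  { toFun := X1
    map_add' := by intro a b; ext i; fin_cases i <;> simp [X1] <;> ring
    map_smul' := by intro c a; ext i; fin_cases i <;> simp [X1] <;> ring }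

def X2L : E4 →L[ℝ] E4 := LinearMap.toContinuousLinearMap
  { toFun := X2
    map_add' := by intro a b; ext i; fin_cases i <;> simp [X2] <;> ring
    map_smul' := by intro c a; ext i; fin_cases i <;> simp [X2] <;> ring }

lemma X1L_apply (v : E4) : X1L v = X1 v := rfl
lemma X2L_apply (v : E4) : X2L v = X2 v := rfl

lemma trace4 (L : E4 →L[ℝ] E4) :
    LinearMap.trace ℝ E4 L.toLinearMap =
      L (EuclideanSpace.single 0 1) 0 + L (EuclideanSpace.single 1 1) 1
      + L (EuclideanSpace.single 2 1) 2 + L (EuclideanSpace.single 3 1) 3 := by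
  classical
  rw [LinearMap.trace_eq_matrix_trace ℝ ((EuclideanSpace.basisFun (Fin 4) ℝ).toBasis)]
  simp [Matrix.trace, Fin.sum_univ_four, LinearMap.toMatrix_apply]

def Dab (a₁ a₂ : ℝ) (p : E4) : E4 →L[ℝ] E4 :=
  ((2 * a₁ * (p 0 * p 3 + p 1 * p 2)) • X1L +
    ((2*a₁) • ((p 0 • prj 3 + p 3 • prj 0) + (p 1 • prj 2 + p 2 • prj 1))).smulRight (X1 p)) +
  ((2 * a₂ * (p 0 * p 2 - p 1 * p 3)) • X2L +
    ((2*a₂) • ((p 0 • prj 2 + p 2 • prj 0) - (p 1 • prj 3 + p 3 • prj 1))).smulRight (X2 p))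

lemma hasFDerivAt_abField (a₁ a₂ : ℝ) (p : E4) :
    HasFDerivAt (abField a₁ a₂) (Dab a₁ a₂ p) p := by
  have hX1 : HasFDerivAt (fun q : E4 => X1 q) X1L p := X1L.hasFDerivAt
  have hX2 : HasFDerivAt (fun q : E4 => X2 q) X2L p := X2L.hasFDerivAt
  have h1 : HasFDerivAt (fun q : E4 => 2 * a₁ * (q 0 * q 3 + q 1 * q 2))
      ((2*a₁) • ((p 0 • prj 3 + p 3 • prj 0) + (p 1 • prj 2 + p 2 • prj 1))) p :=
    (((((prj 0).hasFDerivAt).mul ((prj 3).hasFDerivAt)).add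
      (((prj 1).hasFDerivAt).mul ((prj 2).hasFDerivAt))).const_mul (2*a₁))
  have h2 : HasFDerivAt (fun q : E4 => 2 * a₂ * (q 0 * q 2 - q 1 * q 3))
      ((2*a₂) • ((p 0 • prj 2 + p 2 • prj 0) - (p 1 • prj 3 + p 3 • prj 1))) p :=
    (((((prj 0).hasFDerivAt).mul ((prj 2).hasFDerivAt)).sub
      (((prj 1).hasFDerivAt).mul ((prj 3).hasFDerivAt))).const_mul (2*a₂))
  exact (h1.smul hX1).add (h2.smul hX2)

lemma sq_hasFDerivAt (f : E4 → ℝ) (f' : E4 →L[ℝ] ℝ) (p : E4) (h : HasFDerivAt f f' p) :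
    HasFDerivAt (fun q => f q ^ 2) ((2 * f p) • f') p := by
  have hfun : (fun q => f q ^ 2) = fun y => f y * f y := funext fun y => pow_two _
  have hC : (2 * f p) • f' = f p • f' + f p • f' := by rw [two_mul, add_smul]
  rw [hfun, hC]
  exact h.mul h

def gPress (a₁ a₂ : ℝ) (p : E4) : E4 :=
  WithLp.toLp 2 ![2 * a₁ * a₂ * (p 0 ^ 2 + p 1 ^ 2 - p 2 ^ 2 - p 3 ^ 2) * p 0,
    2 * a₁ * a₂ * (p 0 ^ 2 + p 1 ^ 2 - p 2 ^ 2 - p 3 ^ 2) * p 1,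
    -(2 * a₁ * a₂ * (p 0 ^ 2 + p 1 ^ 2 - p 2 ^ 2 - p 3 ^ 2) * p 2),
    -(2 * a₁ * a₂ * (p 0 ^ 2 + p 1 ^ 2 - p 2 ^ 2 - p 3 ^ 2) * p 3)]

lemma gradient_abPressure (a₁ a₂ : ℝ) (p : E4) :
    gradient (abPressure a₁ a₂) p = gPress a₁ a₂ p := by
  have hτ : HasFDerivAt (fun q : E4 => q 0 ^ 2 + q 1 ^ 2 - q 2 ^ 2 - q 3 ^ 2)
      ((2 * p 0) • prj 0 + (2 * p 1) • prj 1 - (2 * p 2) • prj 2 - (2 * p 3) • prj 3) p := by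
    have h := fun i : Fin 4 => sq_hasFDerivAt _ _ p ((prj i).hasFDerivAt (x := p))
    exact (((h 0).add (h 1)).sub (h 2)).sub (h 3)
  have hD : HasFDerivAt (abPressure a₁ a₂)
      ((InnerProductSpace.toDual ℝ E4) (gPress a₁ a₂ p)) p := by
    have h2 := ((((sq_hasFDerivAt _ _ p hτ).const_mul (2:ℝ)).sub_const 1).const_mul ((1/4)*a₁*a₂))
    have he : HasFDerivAt (abPressure a₁ a₂) _ p := h2
    refine he.congr_fderiv ?_
    ext v
    simp [gPress, InnerProductSpace.toDual_apply_apply, PiLp.inner_apply, RCLike.inner_apply,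
      Fin.sum_univ_four, prj]
    ring
  have := hD.hasGradientAt.gradient
  simpa using this

/-- `u = 2a₁(x₁y₂+y₁x₂)X₁ + 2a₂(x₁x₂−y₁y₂)X₂` is a steady Euler field on
S³ with pressure `abPressure a₁ a₂`, and in Hopf coordinates its Bernoulli function
`b = π + ½|u|²` equals `¼[a₁a₂cos 4s + (a₁²+a₂²−(a₁²−a₂²)cos 2(φ₁+φ₂))sin² 2s]`. -/
theorem statement15 (a₁ a₂ : ℝ) :
    IsSteadyEulerWithPressure (abField a₁ a₂) (abPressure a₁ a₂) ∧
    ∀ s φ₁ φ₂ : ℝ,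
      abPressure a₁ a₂ (hopfPt s φ₁ φ₂)
          + (1/2) * ⟪abField a₁ a₂ (hopfPt s φ₁ φ₂), abField a₁ a₂ (hopfPt s φ₁ φ₂)⟫
        = (1/4) * (a₁ * a₂ * Real.cos (4 * s)
            + (a₁ ^ 2 + a₂ ^ 2 - (a₁ ^ 2 - a₂ ^ 2) * Real.cos (2 * (φ₁ + φ₂)))
              * Real.sin (2 * s) ^ 2) := by
  constructor
  · intro p hp
    have hs : p 0^2 + p 1^2 + p 2^2 + p 3^2 = 1 := by
      have h : ⟪p, p⟫ = 1 := by rw [real_inner_self_eq_norm_sq, hp]; norm_num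
      rw [inner4] at h
      linear_combination h
    have hfd : fderiv ℝ (abField a₁ a₂) p = Dab a₁ a₂ p := (hasFDerivAt_abField a₁ a₂ p).fderiv
    refine ⟨?_, ?_⟩
    · rw [sdiv, hfd, trace4, inner4]
      simp only [Dab, abField, X1, X2, X1L_apply, X2L_apply, prj_apply,
        ContinuousLinearMap.add_apply, ContinuousLinearMap.coe_smul',
        ContinuousLinearMap.smulRight_apply, ContinuousLinearMap.coe_sub',
        ContinuousLinearMap.sub_apply, Pi.smul_apply, Pi.sub_apply, Pi.add_apply,
        PiLp.add_apply, PiLp.smul_apply, PiLp.sub_apply, PiLp.neg_apply, PiLp.toLp_apply,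
        smul_eq_mul, EuclideanSpace.single_apply,
        Matrix.cons_val_zero, Matrix.cons_val_one, Matrix.head_cons,
        Matrix.cons_val_two, Matrix.tail_cons, Matrix.cons_val_three, Matrix.head_fin_const,
        Fin.reduceEq, reduceIte]
      ring
    · rw [scov, sgrad, hfd, gradient_abPressure]
      ext i
      rw [Pt, Pt, inner4, inner4]
      fin_cases i
      · simp only [Pt, Dab, abField, gPress, X1, X2, X1L_apply, X2L_apply, prj_apply,
            ContinuousLinearMap.add_apply, ContinuousLinearMap.coe_smul',
            ContinuousLinearMap.smulRight_apply, ContinuousLinearMap.coe_sub',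
            ContinuousLinearMap.sub_apply, Pi.smul_apply, Pi.sub_apply, Pi.add_apply,
            PiLp.add_apply, PiLp.smul_apply, PiLp.sub_apply, PiLp.neg_apply, PiLp.toLp_apply,
            smul_eq_mul, Fin.isValue, Fin.zero_eta, Fin.mk_one, Fin.reduceFinMk,
            Matrix.cons_val_zero, Matrix.cons_val_one, Matrix.head_cons,
            Matrix.cons_val_two, Matrix.tail_cons, Matrix.cons_val_three, Matrix.head_fin_const]
        linear_combination ((4*a₁^2*(p 0*p 3+p 1*p 2)^2 + 4*a₂^2*(p 0*p 2-p 1*p 3)^2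
          - 2*a₁*a₂*(p 0^2+p 1^2-p 2^2-p 3^2)) * p 0) * hs
      · simp only [Pt, Dab, abField, gPress, X1, X2, X1L_apply, X2L_apply, prj_apply,
            ContinuousLinearMap.add_apply, ContinuousLinearMap.coe_smul',
            ContinuousLinearMap.smulRight_apply, ContinuousLinearMap.coe_sub',
            ContinuousLinearMap.sub_apply, Pi.smul_apply, Pi.sub_apply, Pi.add_apply,
            PiLp.add_apply, PiLp.smul_apply, PiLp.sub_apply, PiLp.neg_apply, PiLp.toLp_apply,
            smul_eq_mul, Fin.isValue, Fin.zero_eta, Fin.mk_one, Fin.reduceFinMk,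
            Matrix.cons_val_zero, Matrix.cons_val_one, Matrix.head_cons,
            Matrix.cons_val_two, Matrix.tail_cons, Matrix.cons_val_three, Matrix.head_fin_const]
        linear_combination ((4*a₁^2*(p 0*p 3+p 1*p 2)^2 + 4*a₂^2*(p 0*p 2-p 1*p 3)^2
          - 2*a₁*a₂*(p 0^2+p 1^2-p 2^2-p 3^2)) * p 1) * hs
      · simp only [Pt, Dab, abField, gPress, X1, X2, X1L_apply, X2L_apply, prj_apply,
            ContinuousLinearMap.add_apply, ContinuousLinearMap.coe_smul',
            ContinuousLinearMap.smulRight_apply, ContinuousLinearMap.coe_sub',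
            ContinuousLinearMap.sub_apply, Pi.smul_apply, Pi.sub_apply, Pi.add_apply,
            PiLp.add_apply, PiLp.smul_apply, PiLp.sub_apply, PiLp.neg_apply, PiLp.toLp_apply,
            smul_eq_mul, Fin.isValue, Fin.zero_eta, Fin.mk_one, Fin.reduceFinMk,
            Matrix.cons_val_zero, Matrix.cons_val_one, Matrix.head_cons,
            Matrix.cons_val_two, Matrix.tail_cons, Matrix.cons_val_three, Matrix.head_fin_const]
        linear_combination ((4*a₁^2*(p 0*p 3+p 1*p 2)^2 + 4*a₂^2*(p 0*p 2-p 1*p 3)^2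
          + 2*a₁*a₂*(p 0^2+p 1^2-p 2^2-p 3^2)) * p 2) * hs
      · simp only [Pt, Dab, abField, gPress, X1, X2, X1L_apply, X2L_apply, prj_apply,
            ContinuousLinearMap.add_apply, ContinuousLinearMap.coe_smul',
            ContinuousLinearMap.smulRight_apply, ContinuousLinearMap.coe_sub',
            ContinuousLinearMap.sub_apply, Pi.smul_apply, Pi.sub_apply, Pi.add_apply,
            PiLp.add_apply, PiLp.smul_apply, PiLp.sub_apply, PiLp.neg_apply, PiLp.toLp_apply,
            smul_eq_mul, Fin.isValue, Fin.zero_eta, Fin.mk_one, Fin.reduceFinMk,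
            Matrix.cons_val_zero, Matrix.cons_val_one, Matrix.head_cons,
            Matrix.cons_val_two, Matrix.tail_cons, Matrix.cons_val_three, Matrix.head_fin_const]
        linear_combination ((4*a₁^2*(p 0*p 3+p 1*p 2)^2 + 4*a₂^2*(p 0*p 2-p 1*p 3)^2
          + 2*a₁*a₂*(p 0^2+p 1^2-p 2^2-p 3^2)) * p 3) * hs
  · intro s φ₁ φ₂
    have h4 : (4:ℝ)*s = 2*(2*s) := by ring
    rw [h4, Real.cos_two_mul, Real.cos_two_mul, Real.cos_two_mul, Real.sin_two_mul,
      Real.cos_add, inner4]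
    simp only [abPressure, abField, hopfPt, X1, X2,
      PiLp.add_apply, PiLp.smul_apply, PiLp.toLp_apply, smul_eq_mul,
      Matrix.cons_val_zero, Matrix.cons_val_one, Matrix.head_cons,
      Matrix.cons_val_two, Matrix.tail_cons, Matrix.cons_val_three, Matrix.head_fin_const]
    have hP := Real.sin_sq_add_cos_sq s
    have hQ1 := Real.sin_sq_add_cos_sq φ₁
    have hQ2 := Real.sin_sq_add_cos_sq φ₂
    linear_combination (-(1/2)*a₁*a₂*(Real.cos s^2*(Real.cos φ₁^2+Real.sin φ₁^2) - Real.sin s^2*(Real.cos φ₂^2+Real.sin φ₂^2) + (2*Real.cos s^2 - 1)) + (2*Real.cos s^2*Real.sin s^2*(a₁^2*(Real.cos φ₁*Real.sin φ₂+Real.sin φ₁*Real.cos φ₂)^2+a₂^2*(Real.cos φ₁*Real.cos φ₂-Real.sin φ₁*Real.sin φ₂)^2)))*hP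
      + ((1/2)*a₁*a₂*(Real.cos s^2*(Real.cos φ₁^2+Real.sin φ₁^2) - Real.sin s^2*(Real.cos φ₂^2+Real.sin φ₂^2) + (2*Real.cos s^2 - 1))*Real.cos s^2 + 2*Real.cos s^2*Real.sin s^2*a₁^2*(Real.sin φ₂^2+Real.cos φ₂^2) + (2*Real.cos s^2*Real.sin s^2*(a₁^2*(Real.cos φ₁*Real.sin φ₂+Real.sin φ₁*Real.cos φ₂)^2+a₂^2*(Real.cos φ₁*Real.cos φ₂-Real.sin φ₁*Real.sin φ₂)^2))*Real.cos s^2)*hQ1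
      + (-(1/2)*a₁*a₂*(Real.cos s^2*(Real.cos φ₁^2+Real.sin φ₁^2) - Real.sin s^2*(Real.cos φ₂^2+Real.sin φ₂^2) + (2*Real.cos s^2 - 1))*Real.sin s^2 + 2*Real.cos s^2*Real.sin s^2*a₁^2 + (2*Real.cos s^2*Real.sin s^2*(a₁^2*(Real.cos φ₁*Real.sin φ₂+Real.sin φ₁*Real.cos φ₂)^2+a₂^2*(Real.cos φ₁*Real.cos φ₂-Real.sin φ₁*Real.sin φ₂)^2))*Real.sin s^2)*hQ2
end
end

section
/- Let u(p) = 2a₁(x₁y₂+y₁x₂)X₁(p) + 2a₂(x₁x₂−y₁y₂)X₂(p). If a₁ = a₂ then u is a strong Beltrami field with eigenvalue 4: (curl u)(p) = 4·u(p) for all p∈S³. Conversely, if (a₁,a₂) ≠ (0,0) and there exists a smooth function θ on S³ with (curl u)(p) = θ(p)·u(p) for all p∈S³, then a₁ = a₂. -/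
open RealInnerProductSpace

noncomputable section

/-! ### Auxiliary machinery for statement 16 -/

section Statement16Aux

lemma inner_eval16 (x y : E4) : ⟪x, y⟫ = x 0*y 0 + x 1*y 1 + x 2*y 2 + x 3*y 3 := by
  simp [PiLp.inner_apply, Fin.sum_univ_four, RCLike.inner_apply]; ring

lemma norm_one_sq16 (p : E4) (hp : ‖p‖ = 1) : p 0^2 + p 1^2 + p 2^2 + p 3^2 = 1 := by
  have := real_inner_self_eq_norm_sq p
  rw [hp] at this
  simp only [inner_eval16] at this
  nlinarith [this]

def X1L16 : E4 →L[ℝ] E4 := LinearMap.toContinuousLinearMap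
  { toFun := X1
    map_add' := fun x y => by ext i; fin_cases i <;> (simp [X1]; try ring)
    map_smul' := fun c x => by ext i; fin_cases i <;> (simp [X1]; try ring) }

def X2L16 : E4 →L[ℝ] E4 := LinearMap.toContinuousLinearMap
  { toFun := X2
    map_add' := fun x y => by ext i; fin_cases i <;> (simp [X2]; try ring)
    map_smul' := fun c x => by ext i; fin_cases i <;> (simp [X2]; try ring) }

lemma fderiv_abField_apply16 (a₁ a₂ : ℝ) (p v : E4) :
    fderiv ℝ (abField a₁ a₂) p v =
      (2*a₁*(v 0*p 3 + p 0*v 3 + (v 1*p 2 + p 1*v 2))) • X1 p +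
      ((2*a₁*(p 0*p 3 + p 1*p 2)) • X1 v +
      ((2*a₂*(v 0*p 2 + p 0*v 2 - (v 1*p 3 + p 1*v 3))) • X2 p +
       (2*a₂*(p 0*p 2 - p 1*p 3)) • X2 v)) := by
  have h0 : HasFDerivAt (fun q : E4 => q 0) (EuclideanSpace.proj (0:Fin 4) : E4 →L[ℝ] ℝ) p :=
    (EuclideanSpace.proj (0:Fin 4) : E4 →L[ℝ] ℝ).hasFDerivAt
  have h1 : HasFDerivAt (fun q : E4 => q 1) (EuclideanSpace.proj (1:Fin 4) : E4 →L[ℝ] ℝ) p :=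
    (EuclideanSpace.proj (1:Fin 4) : E4 →L[ℝ] ℝ).hasFDerivAt
  have h2 : HasFDerivAt (fun q : E4 => q 2) (EuclideanSpace.proj (2:Fin 4) : E4 →L[ℝ] ℝ) p :=
    (EuclideanSpace.proj (2:Fin 4) : E4 →L[ℝ] ℝ).hasFDerivAt
  have h3 : HasFDerivAt (fun q : E4 => q 3) (EuclideanSpace.proj (3:Fin 4) : E4 →L[ℝ] ℝ) p :=
    (EuclideanSpace.proj (3:Fin 4) : E4 →L[ℝ] ℝ).hasFDerivAt
  have hX1 : HasFDerivAt X1 (X1L16 : E4 →L[ℝ] E4) p := X1L16.hasFDerivAt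
  have hX2 : HasFDerivAt X2 (X2L16 : E4 →L[ℝ] E4) p := X2L16.hasFDerivAt
  have H := ((((h0.mul h3).add (h1.mul h2)).const_mul (2*a₁)).smul hX1).add
    ((((h0.mul h2).sub (h1.mul h3)).const_mul (2*a₂)).smul hX2)
  have H' : HasFDerivAt (abField a₁ a₂) _ p := H
  rw [H'.fderiv]
  ext i
  fin_cases i <;>
    (simp [X1, X2, X1L16, X2L16, PiLp.add_apply, PiLp.smul_apply, smul_eq_mul]; ring)

lemma aux1_16 (p : E4) : p (Fin.succ (2 : Fin 3)) = p 3 := rfl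
lemma aux2_16 (p : E4) : p (Fin.castSucc (2 : Fin 3)) = p 2 := rfl

lemma det4_expand16 (a b c d : E4) : det4 a b c d =
    a 0 * (b 1 * (c 2 * d 3 - c 3 * d 2) - b 2 * (c 1 * d 3 - c 3 * d 1)
       + b 3 * (c 1 * d 2 - c 2 * d 1))
  - a 1 * (b 0 * (c 2 * d 3 - c 3 * d 2) - b 2 * (c 0 * d 3 - c 3 * d 0)
       + b 3 * (c 0 * d 2 - c 2 * d 0))
  + a 2 * (b 0 * (c 1 * d 3 - c 3 * d 1) - b 1 * (c 0 * d 3 - c 3 * d 0)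
       + b 3 * (c 0 * d 1 - c 1 * d 0))
  - a 3 * (b 0 * (c 1 * d 2 - c 2 * d 1) - b 1 * (c 0 * d 2 - c 2 * d 0)
       + b 2 * (c 0 * d 1 - c 1 * d 0)) := by
  simp [det4, Matrix.det_succ_row_zero, Fin.sum_univ_succ, Matrix.det_fin_three, Fin.succAbove]
  ring

lemma crossJX1_16 (p : E4) : crossS p (Jm p) (X1 p)
    = (p 0^2 + p 1^2 + p 2^2 + p 3^2) • X2 p := by
  ext i
  fin_cases i <;>
    (simp [crossS, det4_expand16, Jm, X1, X2, Pi.single_apply, PiLp.smul_apply, smul_eq_mul];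
      ring)

lemma crossJX2_16 (p : E4) : crossS p (Jm p) (X2 p)
    = (p 0^2 + p 1^2 + p 2^2 + p 3^2) • (-X1 p) := by
  ext i
  fin_cases i <;>
    (simp [crossS, det4_expand16, Jm, X1, X2, Pi.single_apply, PiLp.smul_apply,
      PiLp.neg_apply, smul_eq_mul]; ring)

lemma crossX1X2_16 (p : E4) : crossS p (X1 p) (X2 p)
    = (p 0^2 + p 1^2 + p 2^2 + p 3^2) • Jm p := by
  ext i
  fin_cases i <;>
    (simp [crossS, det4_expand16, Jm, X1, X2, Pi.single_apply, PiLp.smul_apply, smul_eq_mul];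
      ring)

lemma tangJm16 (p : E4) : ⟪p, Jm p⟫ = 0 := by
  simp [inner_eval16, Fin.sum_univ_four, Jm]; ring
lemma tangX1_16 (p : E4) : ⟪p, X1 p⟫ = 0 := by
  simp [inner_eval16, Fin.sum_univ_four, X1]; ring
lemma tangX2_16 (p : E4) : ⟪p, X2 p⟫ = 0 := by
  simp [inner_eval16, Fin.sum_univ_four, X2]; ring

/-- Expansion of a vector in the orthonormal basis `{p, Jp, X₁, X₂}` at a unit `p`. -/
lemma basis_expand16 (p x : E4) (h : p 0^2 + p 1^2 + p 2^2 + p 3^2 = 1) :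
    x = ⟪x, p⟫ • p + (⟪x, Jm p⟫ • Jm p + (⟪x, X1 p⟫ • X1 p + ⟪x, X2 p⟫ • X2 p)) := by
  ext i
  fin_cases i
  · simp [inner_eval16, Fin.sum_univ_four, Jm, X1, X2, PiLp.add_apply, PiLp.smul_apply, smul_eq_mul]
    linear_combination (- x 0) * h
  · simp [inner_eval16, Fin.sum_univ_four, Jm, X1, X2, PiLp.add_apply, PiLp.smul_apply, smul_eq_mul]
    linear_combination (- x 1) * h
  · simp [inner_eval16, Fin.sum_univ_four, Jm, X1, X2, PiLp.add_apply, PiLp.smul_apply, smul_eq_mul]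
    linear_combination (- x 2) * h
  · simp [inner_eval16, Fin.sum_univ_four, Jm, X1, X2, PiLp.add_apply, PiLp.smul_apply, smul_eq_mul]
    linear_combination (- x 3) * h

/-- The value of any curl of `abField a₁ a₂` at a point of S³. -/
lemma curl_val16 (a₁ a₂ : ℝ) (c : E4 → E4) (hc : IsCurlOf (abField a₁ a₂) c)
    (p : E4) (hp : ‖p‖ = 1) :
    c p = (2*(a₁-a₂)*(p 2^2 + p 3^2 - p 0^2 - p 1^2)) • Jm p +
        ((4*(a₁+a₂)*(p 0*p 3 + p 1*p 2)) • X1 p +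
         (4*(a₁+a₂)*(p 0*p 2 - p 1*p 3)) • X2 p) := by
  have h : p 0^2 + p 1^2 + p 2^2 + p 3^2 = 1 := norm_one_sq16 p hp
  -- scalar identities
  have eqnJ : ⟪Pt p (fderiv ℝ (abField a₁ a₂) p (X1 p)), X2 p⟫
      - ⟪Pt p (fderiv ℝ (abField a₁ a₂) p (X2 p)), X1 p⟫
      = 2*(a₁-a₂)*(p 2^2 + p 3^2 - p 0^2 - p 1^2) := by
    rw [fderiv_abField_apply16, fderiv_abField_apply16]
    simp only [Pt, inner_eval16, X1, X2, Jm, PiLp.add_apply, PiLp.sub_apply,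
      PiLp.smul_apply, smul_eq_mul, Matrix.cons_val_zero, Matrix.cons_val_one,
      Matrix.head_cons, Matrix.cons_val_two, Matrix.tail_cons, Matrix.cons_val_three]
    linear_combination (2*(a₁-a₂)*(p 2^2 + p 3^2 - p 0^2 - p 1^2)) * h
  have eqn1 : ⟪Pt p (fderiv ℝ (abField a₁ a₂) p (Jm p)), X2 p⟫
      - ⟪Pt p (fderiv ℝ (abField a₁ a₂) p (X2 p)), Jm p⟫
      = -(4*(a₁+a₂)*(p 0*p 3 + p 1*p 2)) := by
    rw [fderiv_abField_apply16, fderiv_abField_apply16]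
    simp only [Pt, inner_eval16, X1, X2, Jm, PiLp.add_apply, PiLp.sub_apply,
      PiLp.smul_apply, smul_eq_mul, Matrix.cons_val_zero, Matrix.cons_val_one,
      Matrix.head_cons, Matrix.cons_val_two, Matrix.tail_cons, Matrix.cons_val_three]
    linear_combination (-(4*(a₁+a₂)*(p 0*p 3 + p 1*p 2))) * h
  have eqn2 : ⟪Pt p (fderiv ℝ (abField a₁ a₂) p (Jm p)), X1 p⟫
      - ⟪Pt p (fderiv ℝ (abField a₁ a₂) p (X1 p)), Jm p⟫
      = 4*(a₁+a₂)*(p 0*p 2 - p 1*p 3) := by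
    rw [fderiv_abField_apply16, fderiv_abField_apply16]
    simp only [Pt, inner_eval16, X1, X2, Jm, PiLp.add_apply, PiLp.sub_apply,
      PiLp.smul_apply, smul_eq_mul, Matrix.cons_val_zero, Matrix.cons_val_one,
      Matrix.head_cons, Matrix.cons_val_two, Matrix.tail_cons, Matrix.cons_val_three]
    linear_combination (4*(a₁+a₂)*(p 0*p 2 - p 1*p 3)) * h
  -- the three frame components of c p
  have sJ : ⟪c p, Jm p⟫ = 2*(a₁-a₂)*(p 2^2 + p 3^2 - p 0^2 - p 1^2) := by
    have k := hc.2 p hp (X1 p) (X2 p) (tangX1_16 p) (tangX2_16 p)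
    rw [crossX1X2_16 p, h, one_smul, eqnJ] at k
    linarith [k]
  have s1 : ⟪c p, X1 p⟫ = 4*(a₁+a₂)*(p 0*p 3 + p 1*p 2) := by
    have k := hc.2 p hp (Jm p) (X2 p) (tangJm16 p) (tangX2_16 p)
    rw [crossJX2_16 p, h, one_smul, inner_neg_right, eqn1] at k
    linarith [k]
  have s2 : ⟪c p, X2 p⟫ = 4*(a₁+a₂)*(p 0*p 2 - p 1*p 3) := by
    have k := hc.2 p hp (Jm p) (X1 p) (tangJm16 p) (tangX1_16 p)
    rw [crossJX1_16 p, h, one_smul, eqn2] at k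
    linarith [k]
  have s0 : ⟪c p, p⟫ = 0 := by
    rw [real_inner_comm]; exact hc.1.2 p hp
  calc c p = ⟪c p, p⟫ • p + (⟪c p, Jm p⟫ • Jm p + (⟪c p, X1 p⟫ • X1 p + ⟪c p, X2 p⟫ • X2 p)) :=
        basis_expand16 p (c p) h
    _ = _ := by rw [s0, sJ, s1, s2, zero_smul, zero_add]

end Statement16Aux

/-- for `u = 2a₁(x₁y₂+y₁x₂)X₁ + 2a₂(x₁x₂−y₁y₂)X₂`: if `a₁ = a₂` then
`curl u = 4u` on S³ (strong Beltrami field); conversely if `(a₁,a₂) ≠ (0,0)` and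
`curl u = θ·u` on S³ for some smooth function `θ`, then `a₁ = a₂`. -/
theorem statement16 (a₁ a₂ : ℝ) :
    (a₁ = a₂ →
      ∀ c : E4 → E4, IsCurlOf (abField a₁ a₂) c →
        ∀ p : E4, ‖p‖ = 1 → c p = (4 : ℝ) • abField a₁ a₂ p) ∧
    ((a₁, a₂) ≠ (0, 0) →
      ∀ c : E4 → E4, IsCurlOf (abField a₁ a₂) c →
        (∃ θ : E4 → ℝ, ContDiff ℝ (⊤ : ℕ∞) θ ∧
          ∀ p : E4, ‖p‖ = 1 → c p = θ p • abField a₁ a₂ p) →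
        a₁ = a₂) := by
  constructor
  · rintro rfl c hc p hp
    rw [curl_val16 a₁ a₁ c hc p hp]
    ext i
    fin_cases i <;>
      (simp [abField, Jm, X1, X2, PiLp.add_apply, PiLp.smul_apply, smul_eq_mul]; ring)
  · rintro - c hc ⟨θ, -, hθ⟩
    set p₀ : E4 := EuclideanSpace.single (0 : Fin 4) (1:ℝ) with hp₀def
    have hp₀ : ‖p₀‖ = 1 := by simp [hp₀def, EuclideanSpace.norm_single]
    have e1 := curl_val16 a₁ a₂ c hc p₀ hp₀
    rw [hθ p₀ hp₀] at e1
    have e3 := congrArg (fun x : E4 => x 1) e1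
    simp [hp₀def, abField, Jm, X1, X2, PiLp.add_apply, PiLp.smul_apply, smul_eq_mul,
      EuclideanSpace.single_apply] at e3
    linarith [e3]
end
end

section
/- Let u(p) = 2a₁(x₁y₂+y₁x₂)X₁(p) + 2a₂(x₁x₂−y₁y₂)X₂(p). Then for all p ∈ S³: D(|u|²)(p)[u(p)] = 16 a₁a₂(a₁+a₂)·(x₁²+y₁²−x₂²−y₂²)(x₁y₂+y₁x₂)(x₁x₂−y₁y₂). Consequently, if a₁ ≠ −a₂ and a₁a₂ ≠ 0, then u is not localizable, and there exist no A ∈ O(4) and no KKPS field w with w(Ap) = A(u(p)) for all p ∈ S³. -/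
open RealInnerProductSpace

noncomputable section

-- AUX LEMMAS
def prjE (i : Fin 4) : E4 →L[ℝ] ℝ := EuclideanSpace.proj i

def abPoly (a₁ a₂ : ℝ) (q : E4) : ℝ :=
  (4*a₁^2*((q 0*q 3+q 1*q 2)*(q 0*q 3+q 1*q 2)) + 4*a₂^2*((q 0*q 2-q 1*q 3)*(q 0*q 2-q 1*q 3)))
    * (q 0*q 0+q 1*q 1+q 2*q 2+q 3*q 3)

lemma inner_abField_fun (a₁ a₂ : ℝ) :
    (fun q : E4 => ⟪abField a₁ a₂ q, abField a₁ a₂ q⟫) = abPoly a₁ a₂ := by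
  funext q
  simp [abField, abPoly, X1, X2, PiLp.inner_apply, RCLike.inner_apply, Fin.sum_univ_four, EuclideanSpace.real_norm_sq_eq]
  ring

lemma abPoly_diff (a₁ a₂ : ℝ) (p : E4) : DifferentiableAt ℝ (abPoly a₁ a₂) p := by
  have h0 : HasFDerivAt (fun q : E4 => q 0) (prjE 0) p := (prjE 0).hasFDerivAt
  have h1 : HasFDerivAt (fun q : E4 => q 1) (prjE 1) p := (prjE 1).hasFDerivAt
  have h2 : HasFDerivAt (fun q : E4 => q 2) (prjE 2) p := (prjE 2).hasFDerivAt
  have h3 : HasFDerivAt (fun q : E4 => q 3) (prjE 3) p := (prjE 3).hasFDerivAt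
  have hα := (h0.mul h3).add (h1.mul h2)
  have hβ := (h0.mul h2).sub (h1.mul h3)
  exact (((((hα.mul hα).const_mul (4*a₁^2)).add
      (((hβ.mul hβ).const_mul (4*a₂^2)))).mul
      ((((h0.mul h0).add (h1.mul h1)).add (h2.mul h2)).add (h3.mul h3)))).differentiableAt

lemma abPoly_fderiv (a₁ a₂ : ℝ) (p : E4) (hp : ‖p‖ = 1) :
    fderiv ℝ (abPoly a₁ a₂) p (abField a₁ a₂ p)
      = 16 * a₁ * a₂ * (a₁ + a₂) * (p 0 ^ 2 + p 1 ^ 2 - p 2 ^ 2 - p 3 ^ 2)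
            * (p 0 * p 3 + p 1 * p 2) * (p 0 * p 2 - p 1 * p 3) := by
  have h0 : HasFDerivAt (fun q : E4 => q 0) (prjE 0) p := (prjE 0).hasFDerivAt
  have h1 : HasFDerivAt (fun q : E4 => q 1) (prjE 1) p := (prjE 1).hasFDerivAt
  have h2 : HasFDerivAt (fun q : E4 => q 2) (prjE 2) p := (prjE 2).hasFDerivAt
  have h3 : HasFDerivAt (fun q : E4 => q 3) (prjE 3) p := (prjE 3).hasFDerivAt
  have hα := (h0.mul h3).add (h1.mul h2)
  have hβ := (h0.mul h2).sub (h1.mul h3)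
  have hf : HasFDerivAt (abPoly a₁ a₂) _ p := ((((hα.mul hα).const_mul (4*a₁^2)).add
      (((hβ.mul hβ).const_mul (4*a₂^2)))).mul
      ((((h0.mul h0).add (h1.mul h1)).add (h2.mul h2)).add (h3.mul h3)))
  rw [hf.fderiv]
  have hs : p 0^2 + p 1^2 + p 2^2 + p 3^2 = 1 := by
    have h := real_inner_self_eq_norm_sq p
    rw [hp] at h
    simp [PiLp.inner_apply, RCLike.inner_apply, Fin.sum_univ_four, EuclideanSpace.real_norm_sq_eq] at h
    linear_combination h
  simp only [ContinuousLinearMap.add_apply, ContinuousLinearMap.smul_apply,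
    ContinuousLinearMap.sub_apply, smul_eq_mul, prjE, PiLp.proj_apply, Pi.mul_apply, Pi.add_apply, Pi.sub_apply]
  simp only [abField, X1, X2, PiLp.add_apply, PiLp.smul_apply, smul_eq_mul,
    Matrix.cons_val_zero, Matrix.cons_val_one, Matrix.head_cons, Matrix.cons_val_two,
    Matrix.tail_cons, Matrix.cons_val_three, Matrix.cons_val_fin_one]
  linear_combination (16 * p 1 * p 1 * p 2 * p 3 * p 3 * p 3 * a₁ * a₂ * a₂ + 16 * p 1 * p 1 * p 2 * p 3 * p 3 * p 3 * a₁ * a₁ * a₂ + 16 * p 1 * p 1 * p 2 * p 2 * p 2 * p 3 * a₁ * a₂ * a₂ + 16 * p 1 * p 1 * p 2 * p 2 * p 2 * p 3 * a₁ * a₁ * a₂ + (-16) * p 1 * p 1 * p 1 * p 1 * p 2 * p 3 * a₁ * a₂ * a₂ + (-16) * p 1 * p 1 * p 1 * p 1 * p 2 * p 3 * a₁ * a₁ * a₂ + 16 * p 0 * p 1 * p 3 * p 3 * p 3 * p 3 * a₁ * a₂ * a₂ + 16 * p 0 * p 1 * p 3 * p 3 * p 3 * p 3 * a₁ * a₁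 * a₂ + (-16) * p 0 * p 1 * p 2 * p 2 * p 2 * p 2 * a₁ * a₂ * a₂ + (-16) * p 0 * p 1 * p 2 * p 2 * p 2 * p 2 * a₁ * a₁ * a₂ + (-16) * p 0 * p 1 * p 1 * p 1 * p 3 * p 3 * a₁ * a₂ * a₂ + (-16) * p 0 * p 1 * p 1 * p 1 * p 3 * p 3 * a₁ * a₁ * a₂ + 16 * p 0 * p 1 * p 1 * p 1 * p 2 * p 2 * a₁ * a₂ * a₂ + 16 * p 0 * p 1 * p 1 * p 1 * p 2 * p 2 * a₁ * a₁ * a₂ + (-16) * p 0 * p 0 * p 2 * p 3 * p 3 * p 3 * a₁ * a₂ * a₂ + (-16) * p 0 * p 0 * p 2 * p 3 * p 3 * p 3 * a₁ * a₁ * a₂ + (-16) * p 0 * p 0 * p 2 * p 2 * p 2 * p 3 * a₁ * a₂ * a₂ + (-16) * p 0 * p 0 * p 2 * p 2 * p 2 * p 3 * a₁ * a₁ * a₂ + (-16) * p 0 * p 0 * p 0 * p 1 * p 3 * p 3 * a₁ * a₂ * a₂ + (-16) * p 0 * p 0 * p 0 * p 1 * p 3 * p 3 * a₁ * a₁ *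 a₂ + 16 * p 0 * p 0 * p 0 * p 1 * p 2 * p 2 * a₁ * a₂ * a₂ + 16 * p 0 * p 0 * p 0 * p 1 * p 2 * p 2 * a₁ * a₁ * a₂ + 16 * p 0 * p 0 * p 0 * p 0 * p 2 * p 3 * a₁ * a₂ * a₂ + 16 * p 0 * p 0 * p 0 * p 0 * p 2 * p 3 * a₁ * a₁ * a₂) * hs

def Gk (A B : ℝ → ℝ) : ℝ × ℝ → ℝ := fun z =>
  (A z.1 * A z.1 + B z.1 * B z.1) * z.2 + 2 * A z.1 * B z.1 * (2 * z.1 - z.2)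

def Phi2 : E4 → ℝ × ℝ := fun q => (q 0 * q 0 + q 1 * q 1, q 0 * q 0 + q 1 * q 1 + q 2 * q 2 + q 3 * q 3)

lemma inner_kkps_fun (A B : ℝ → ℝ) :
    (fun q : E4 => ⟪kkps A B q, kkps A B q⟫) = fun q => Gk A B (Phi2 q) := by
  funext q
  have hq : qf q = q 0 * q 0 + q 1 * q 1 := by simp [qf]; ring
  simp only [kkps, Gk, Phi2, hq]
  simp [Jm, Jm', PiLp.inner_apply, RCLike.inner_apply, Fin.sum_univ_four, EuclideanSpace.real_norm_sq_eq]
  ring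

lemma Gk_diff (A B : ℝ → ℝ) (hA : ContDiff ℝ (⊤ : ℕ∞) A) (hB : ContDiff ℝ (⊤ : ℕ∞) B) :
    Differentiable ℝ (Gk A B) := by
  have hA' : Differentiable ℝ A := hA.differentiable (by simp)
  have hB' : Differentiable ℝ B := hB.differentiable (by simp)
  have d1 : Differentiable ℝ (fun z : ℝ × ℝ => A z.1) := hA'.comp differentiable_fst
  have d2 : Differentiable ℝ (fun z : ℝ × ℝ => B z.1) := hB'.comp differentiable_fst
  exact (((d1.mul d1).add (d2.mul d2)).mul differentiable_snd).add
    ((((differentiable_const 2).mul d1).mul d2).mul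
      (((differentiable_const 2).mul differentiable_fst).sub differentiable_snd))

lemma Phi2_hasFDeriv (p : E4) :
    HasFDerivAt Phi2
      ((p 0 • prjE 0 + p 0 • prjE 0 + (p 1 • prjE 1 + p 1 • prjE 1)).prod
       (p 0 • prjE 0 + p 0 • prjE 0 + (p 1 • prjE 1 + p 1 • prjE 1)
        + (p 2 • prjE 2 + p 2 • prjE 2) + (p 3 • prjE 3 + p 3 • prjE 3))) p := by
  have h0 : HasFDerivAt (fun q : E4 => q 0) (prjE 0) p := (prjE 0).hasFDerivAt
  have h1 : HasFDerivAt (fun q : E4 => q 1) (prjE 1) p := (prjE 1).hasFDerivAt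
  have h2 : HasFDerivAt (fun q : E4 => q 2) (prjE 2) p := (prjE 2).hasFDerivAt
  have h3 : HasFDerivAt (fun q : E4 => q 3) (prjE 3) p := (prjE 3).hasFDerivAt
  exact ((h0.mul h0).add (h1.mul h1)).prodMk
    ((((h0.mul h0).add (h1.mul h1)).add (h2.mul h2)).add (h3.mul h3))

lemma kkps_inner_diff (A B : ℝ → ℝ) (hA : ContDiff ℝ (⊤ : ℕ∞) A) (hB : ContDiff ℝ (⊤ : ℕ∞) B) :
    Differentiable ℝ (fun q : E4 => ⟪kkps A B q, kkps A B q⟫) := by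
  rw [inner_kkps_fun]
  exact fun p => ((Gk_diff A B hA hB (Phi2 p)).comp p (Phi2_hasFDeriv p).differentiableAt)

lemma kkps_loc (A B : ℝ → ℝ) (hA : ContDiff ℝ (⊤ : ℕ∞) A) (hB : ContDiff ℝ (⊤ : ℕ∞) B) (p : E4) :
    fderiv ℝ (fun q : E4 => ⟪kkps A B q, kkps A B q⟫) p (kkps A B p) = 0 := by
  rw [inner_kkps_fun]
  have hΦ := Phi2_hasFDeriv p
  have hG : DifferentiableAt ℝ (Gk A B) (Phi2 p) := Gk_diff A B hA hB (Phi2 p)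
  have hcomp : (fun q => Gk A B (Phi2 q)) = (Gk A B) ∘ Phi2 := rfl
  rw [hcomp, fderiv_comp p hG hΦ.differentiableAt, ContinuousLinearMap.comp_apply, hΦ.fderiv]
  have hz : ((p 0 • prjE 0 + p 0 • prjE 0 + (p 1 • prjE 1 + p 1 • prjE 1)).prod
       (p 0 • prjE 0 + p 0 • prjE 0 + (p 1 • prjE 1 + p 1 • prjE 1)
        + (p 2 • prjE 2 + p 2 • prjE 2) + (p 3 • prjE 3 + p 3 • prjE 3))) (kkps A B p) = 0 := by
    have hk : ∀ i, kkps A B p i = (A (qf p) • Jm p + B (qf p) • Jm' p) i := fun _ => rfl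
    apply Prod.ext <;>
    · simp only [ContinuousLinearMap.prod_apply, ContinuousLinearMap.add_apply,
        ContinuousLinearMap.smul_apply, smul_eq_mul, prjE, PiLp.proj_apply, hk,
        PiLp.add_apply, PiLp.smul_apply, Jm, Jm', Matrix.cons_val_zero, Matrix.cons_val_one,
        Matrix.head_cons, Matrix.cons_val_two, Matrix.tail_cons, Matrix.cons_val_three]
      ring_nf
      simp
  rw [hz, map_zero]

lemma abField_tangent (a₁ a₂ : ℝ) (p : E4) : ⟪p, abField a₁ a₂ p⟫ = 0 := by
  simp [abField, X1, X2, PiLp.inner_apply, RCLike.inner_apply, Fin.sum_univ_four]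
  ring

lemma tangent_deriv_eq (f g : E4 → ℝ) (p v : E4) (hfd : DifferentiableAt ℝ f p)
    (hgd : DifferentiableAt ℝ g p) (hp : ‖p‖ = 1) (hv : ⟪p, v⟫ = 0)
    (hfg : ∀ q : E4, ‖q‖ = 1 → f q = g q) :
    fderiv ℝ f p v = fderiv ℝ g p v := by
  rcases eq_or_ne v 0 with rfl | hv0
  · simp
  have hc : ‖v‖ ≠ 0 := norm_ne_zero_iff.mpr hv0
  set e : E4 := ‖v‖⁻¹ • v with he
  have hev : v = ‖v‖ • e := by rw [he, smul_smul, mul_inv_cancel₀ hc, one_smul]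
  have hpe : ⟪p, e⟫ = 0 := by rw [he, real_inner_smul_right, hv, mul_zero]
  have hee : ‖e‖ = 1 := by
    rw [he, norm_smul, norm_inv, norm_norm]
    exact inv_mul_cancel₀ hc
  set γ : ℝ → E4 := fun t => Real.cos t • p + Real.sin t • e with hγ
  have hγ0 : γ 0 = p := by simp [hγ]
  have hγd : HasDerivAt γ e 0 := by
    have h := ((Real.hasDerivAt_cos 0).smul_const p).add ((Real.hasDerivAt_sin 0).smul_const e)
    simp at h
    exact h
  have hγs : ∀ t, ‖γ t‖ = 1 := by
    intro t
    have hpp : ⟪p, p⟫ = (1 : ℝ) := by rw [real_inner_self_eq_norm_sq, hp]; norm_num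
    have heep : ⟪e, e⟫ = (1 : ℝ) := by rw [real_inner_self_eq_norm_sq, hee]; norm_num
    have hep : ⟪e, p⟫ = (0 : ℝ) := by rw [real_inner_comm]; exact hpe
    have h2 : ‖γ t‖ ^ 2 = 1 := by
      rw [← real_inner_self_eq_norm_sq]
      simp only [hγ, inner_add_left, inner_add_right, real_inner_smul_left,
        real_inner_smul_right, hpp, heep, hpe, hep]
      nlinarith [Real.sin_sq_add_cos_sq t]
    nlinarith [norm_nonneg (γ t), h2]
  have hfd' : HasFDerivAt f (fderiv ℝ f p) (γ 0) := by rw [hγ0]; exact hfd.hasFDerivAt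
  have hgd' : HasFDerivAt g (fderiv ℝ g p) (γ 0) := by rw [hγ0]; exact hgd.hasFDerivAt
  have hfγ : HasDerivAt (f ∘ γ) (fderiv ℝ f p e) 0 := hfd'.comp_hasDerivAt 0 hγd
  have hgγ : HasDerivAt (g ∘ γ) (fderiv ℝ g p e) 0 := hgd'.comp_hasDerivAt 0 hγd
  have heq : f ∘ γ = g ∘ γ := funext fun t => hfg (γ t) (hγs t)
  have hde : fderiv ℝ f p e = fderiv ℝ g p e := by
    have h1 := hfγ.deriv
    have h2 := hgγ.deriv
    rw [heq] at h1
    rw [← h1, ← h2]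
  rw [hev, (fderiv ℝ f p).map_smul, (fderiv ℝ g p).map_smul, hde]

def pstar : E4 := WithLp.toLp 2 ![2/3, 2/3, 1/3, 0]

lemma pstar_norm : ‖pstar‖ = 1 := by
  rw [EuclideanSpace.norm_eq]
  simp [pstar, Fin.sum_univ_four, Real.norm_eq_abs, sq_abs]
  norm_num

/-- for `u = 2a₁(x₁y₂+y₁x₂)X₁ + 2a₂(x₁x₂−y₁y₂)X₂` one has, on S³,
`D(|u|²)(p)[u(p)] = 16a₁a₂(a₁+a₂)(x₁²+y₁²−x₂²−y₂²)(x₁y₂+y₁x₂)(x₁x₂−y₁y₂)`; hence if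
`a₁ ≠ −a₂` and `a₁a₂ ≠ 0` then `u` is not localizable and is not isometric to any KKPS
field. -/
theorem statement18 (a₁ a₂ : ℝ) :
    (∀ p : E4, ‖p‖ = 1 →
      fderiv ℝ (fun q => ⟪abField a₁ a₂ q, abField a₁ a₂ q⟫) p (abField a₁ a₂ p)
        = 16 * a₁ * a₂ * (a₁ + a₂) * (p 0 ^ 2 + p 1 ^ 2 - p 2 ^ 2 - p 3 ^ 2)
            * (p 0 * p 3 + p 1 * p 2) * (p 0 * p 2 - p 1 * p 3)) ∧
    (a₁ ≠ -a₂ → a₁ * a₂ ≠ 0 →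
      ¬ IsLocalizable (abField a₁ a₂) ∧
      ¬ ∃ (Φ : E4 ≃ₗᵢ[ℝ] E4) (A B : ℝ → ℝ), ContDiff ℝ (⊤ : ℕ∞) A ∧ ContDiff ℝ (⊤ : ℕ∞) B ∧
          ∀ p : E4, ‖p‖ = 1 → kkps A B (Φ p) = Φ (abField a₁ a₂ p)) := by
  have hmain : ∀ p : E4, ‖p‖ = 1 →
      fderiv ℝ (fun q => ⟪abField a₁ a₂ q, abField a₁ a₂ q⟫) p (abField a₁ a₂ p)
        = 16 * a₁ * a₂ * (a₁ + a₂) * (p 0 ^ 2 + p 1 ^ 2 - p 2 ^ 2 - p 3 ^ 2)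
            * (p 0 * p 3 + p 1 * p 2) * (p 0 * p 2 - p 1 * p 3) := by
    intro p hp
    rw [inner_abField_fun]
    exact abPoly_fderiv a₁ a₂ p hp
  refine ⟨hmain, fun h₁ h₂ => ?_⟩
  have hsum : a₁ + a₂ ≠ 0 := fun h => h₁ (by linarith)
  have hp0 : pstar 0 = 2/3 := rfl
  have hp1 : pstar 1 = 2/3 := rfl
  have hp2 : pstar 2 = 1/3 := rfl
  have hp3 : pstar 3 = 0 := rfl
  have hval := hmain pstar pstar_norm
  have key : a₁ * a₂ * (a₁ + a₂) ≠ 0 := mul_ne_zero h₂ hsum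
  have hne : 16 * a₁ * a₂ * (a₁ + a₂) * (pstar 0 ^ 2 + pstar 1 ^ 2 - pstar 2 ^ 2 - pstar 3 ^ 2)
      * (pstar 0 * pstar 3 + pstar 1 * pstar 2) * (pstar 0 * pstar 2 - pstar 1 * pstar 3) ≠ 0 := by
    rw [hp0, hp1, hp2, hp3]
    intro h
    exact key (by linear_combination (729/448 : ℝ) * h)
  constructor
  · intro hloc
    exact hne (hval.symm.trans (hloc pstar pstar_norm))
  · rintro ⟨Φ, A, B, hA, hB, hw⟩
    have hΦd : HasFDerivAt (⇑Φ) (Φ.toContinuousLinearEquiv : E4 →L[ℝ] E4) pstar :=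
      (Φ.toContinuousLinearEquiv : E4 ≃L[ℝ] E4).hasFDerivAt
    set g : E4 → ℝ := fun q => ⟪kkps A B (Φ q), kkps A B (Φ q)⟫ with hgdef
    have hcomp : g = (fun r => ⟪kkps A B r, kkps A B r⟫) ∘ ⇑Φ := rfl
    have hgd : DifferentiableAt ℝ g pstar :=
      (kkps_inner_diff A B hA hB (Φ pstar)).comp pstar hΦd.differentiableAt
    have hfd : DifferentiableAt ℝ (fun q : E4 => ⟪abField a₁ a₂ q, abField a₁ a₂ q⟫) pstar := by
      rw [inner_abField_fun]; exact abPoly_diff a₁ a₂ pstar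
    have hfg : ∀ q : E4, ‖q‖ = 1 →
        (fun q : E4 => ⟪abField a₁ a₂ q, abField a₁ a₂ q⟫) q = g q := by
      intro q hq
      simp only [hgdef]
      rw [hw q hq, Φ.inner_map_map]
    have hteq := tangent_deriv_eq _ g pstar (abField a₁ a₂ pstar) hfd hgd pstar_norm
      (abField_tangent a₁ a₂ pstar) hfg
    have hgz : fderiv ℝ g pstar (abField a₁ a₂ pstar) = 0 := by
      rw [hcomp, fderiv_comp pstar (kkps_inner_diff A B hA hB (Φ pstar))
        hΦd.differentiableAt, ContinuousLinearMap.comp_apply, hΦd.fderiv]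
      have heq : (Φ.toContinuousLinearEquiv : E4 →L[ℝ] E4) (abField a₁ a₂ pstar)
          = kkps A B (Φ pstar) := (hw pstar pstar_norm).symm
      rw [heq]
      exact kkps_loc A B hA hB (Φ pstar)
    exact hne (hval.symm.trans (hteq.trans hgz))
end
end
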